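/- Let f : ℝ → ℝ be continuous with support in [x₀,x₁]. Then ∫_{x₀}^{x₁} f(x) (∫_{x₀}^x (x−t) f(t) dt) dx = − ∫_{x₀}^{x₁} (∫_{x₀}^x f(t) dt)² dx + (∫_ℝ (x₁ − x) f(x) dx)(∫_ℝ f(x) dx). -/

import Mathlib

open MeasureTheory intervalIntegral

theorem stmt_12 (f : ℝ → ℝ) (x₀ x₁ : ℝ) (hf : Continuous f)
    (hsupp : ∀ x, x ∉ Set.Icc x₀ x₁ → f x = 0) :
    (∫ x in x₀..x₁, f x * ∫ t in x₀..x, (x - t) * f t)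
    = -(∫ x in x₀..x₁, (∫ t in x₀..x, f t) ^ 2)
      + (∫ x : ℝ, (x₁ - x) * f x) * (∫ x : ℝ, f x) := by
  rcases lt_or_ge x₁ x₀ with h | h
  · have hf0 : f = 0 := funext fun x => hsupp x (by simp [Set.Icc_eq_empty_of_lt h])
    simp [hf0]
  set F : ℝ → ℝ := fun x => ∫ t in x₀..x, f t with hFdef
  set H : ℝ → ℝ := fun x => ∫ t in x₀..x, t * f t with hHdef
  have hg : Continuous fun t : ℝ => t * f t := continuous_id.mul hf
  have hF : ∀ x : ℝ, HasDerivAt F (f x) x := fun x =>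
    intervalIntegral.integral_hasDerivAt_right (hf.intervalIntegrable _ _)
      (hf.stronglyMeasurableAtFilter _ _) hf.continuousAt
  have hH : ∀ x : ℝ, HasDerivAt H (x * f x) x := fun x =>
    intervalIntegral.integral_hasDerivAt_right (hg.intervalIntegrable _ _)
      (hg.stronglyMeasurableAtFilter _ _) hg.continuousAt
  set G : ℝ → ℝ := fun x => x * F x - H x with hGdef
  have hGeq : ∀ x : ℝ, (∫ t in x₀..x, (x - t) * f t) = G x := by
    intro x
    have : (∫ t in x₀..x, (x - t) * f t)
        = (∫ t in x₀..x, x * f t) - ∫ t in x₀..x, t * f t := by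
      rw [← intervalIntegral.integral_sub (f := fun t => x * f t)
        ((continuous_const.mul hf).intervalIntegrable _ _) (hg.intervalIntegrable _ _)]
      congr 1; ext t; ring
    rw [this, intervalIntegral.integral_const_mul]
  have hG : ∀ x : ℝ, HasDerivAt G (F x) x := by
    intro x
    have h1 := (((hasDerivAt_id x).mul (hF x)).sub (hH x))
    simp only [id_eq] at h1
    have h2 : F x = 1 * F x + x * f x - x * f x := by ring
    rw [h2]
    exact h1
  have hFd : Differentiable ℝ F := fun x => (hF x).differentiableAt
  have hFc : Continuous F := hFd.continuous
  have key := intervalIntegral.integral_mul_deriv_eq_deriv_mul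
    (u := G) (v := F) (u' := F) (v' := f) (a := x₀) (b := x₁)
    (fun x _ => hG x) (fun x _ => hF x)
    (hFc.intervalIntegrable _ _) (hf.intervalIntegrable _ _)
  have hG0 : G x₀ = 0 := by simp [hGdef, hFdef, hHdef]
  have hL : (∫ x in x₀..x₁, f x * ∫ t in x₀..x, (x - t) * f t)
      = ∫ x in x₀..x₁, G x * f x := by
    apply intervalIntegral.integral_congr; intro x _; dsimp only; rw [hGeq]; ring
  have hsq : (∫ x in x₀..x₁, F x * F x) = ∫ x in x₀..x₁, (F x) ^ 2 := by
    apply intervalIntegral.integral_congr; intro x _; ring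
  have e1 : F x₁ = ∫ x : ℝ, f x := by
    simp only [hFdef]
    rw [intervalIntegral.integral_of_le h, ← MeasureTheory.integral_Icc_eq_integral_Ioc,
      MeasureTheory.setIntegral_eq_integral_of_forall_compl_eq_zero hsupp]
  have e2 : G x₁ = ∫ x : ℝ, (x₁ - x) * f x := by
    rw [← hGeq x₁, intervalIntegral.integral_of_le h,
      ← MeasureTheory.integral_Icc_eq_integral_Ioc,
      MeasureTheory.setIntegral_eq_integral_of_forall_compl_eq_zero
        (fun x hx => by rw [hsupp x hx]; ring)]
  rw [hL, key, hG0, hsq, e1, e2]; ring
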